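/- Consider the deterministic automaton A_B whose states are the subsets of B, with initial and unique final state ∅, and transition from state B' on letter x to (B' ∪ {x}) ∩ Com(x) ∩ B. Then for every word w = a₁⋯aₙ ∈ Σ*, the state reached after reading w from ∅ equals TA(φ(w)) ∩ B, where φ(w) is the trace represented by w. -/

import Mathlib

/-- The relation `ab ~ ba` for commuting pairs `(a,b) ∈ θ`. -/
def traceRel {α : Type} (θ : α → α → Prop) : FreeMonoid α → FreeMonoid α → Prop :=
  fun u v => ∃ a b, θ a b ∧ u = FreeMonoid.of a * FreeMonoid.of b ∧
    v = FreeMonoid.of b * FreeMonoid.of a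

/-- The trace congruence generated by `ab ~ ba` for `(a,b) ∈ θ`. -/
def traceCon {α : Type} (θ : α → α → Prop) : Con (FreeMonoid α) := conGen (traceRel θ)

/-- The trace monoid `M(Σ,θ)`. -/
abbrev TraceMonoid {α : Type} (θ : α → α → Prop) := (traceCon θ).Quotient

/-- The canonical surjection `φ : Σ* → M(Σ,θ)`. -/
def phi {α : Type} (θ : α → α → Prop) : FreeMonoid α →* TraceMonoid θ := (traceCon θ).mk'

/-- The terminal alphabet of a trace. -/
def TA {α : Type} (θ : α → α → Prop) (t : TraceMonoid θ) : Set α :=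
  {x | ∃ u : TraceMonoid θ, t = u * phi θ (FreeMonoid.of x)}

/-- The left Lazard factor: traces whose terminal alphabet avoids `B`. -/
def leftFactor {α : Type} (θ : α → α → Prop) (B : Set α) : Set (TraceMonoid θ) :=
  {t | TA θ t ∩ B = ∅}

/-- The submonoid of `M(Σ,θ)` generated by the letters of `B`,
identified with `M(B,θ_B)`. -/
def subTrace {α : Type} (θ : α → α → Prop) (B : Set α) : Submonoid (TraceMonoid θ) :=
  Submonoid.closure ((fun x => phi θ (FreeMonoid.of x)) '' B)

section Aux

variable {α : Type} (θ : α → α → Prop)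

/-- one transition step (no `B` restriction). -/
def tstep (S : Set α) (x : α) : Set α := (S ∪ {x}) ∩ {z | θ x z}

lemma tstep_swap (hrefl : ∀ x, θ x x) (hsymm : ∀ x y, θ x y → θ y x)
    {a b : α} (hab : θ a b) (S : Set α) :
    tstep θ (tstep θ S a) b = tstep θ (tstep θ S b) a := by
  ext z
  simp only [tstep, Set.mem_inter_iff, Set.mem_union, Set.mem_singleton_iff, Set.mem_setOf_eq]
  by_cases hza : z = a <;> by_cases hzb : z = b <;>
    simp_all [hrefl a, hrefl b, hab, hsymm a b hab] <;> tauto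

lemma fold_invariant (hrefl : ∀ x, θ x x) (hsymm : ∀ x y, θ x y → θ y x) {u v : FreeMonoid α} (h : traceCon θ u v) :
    ∀ S : Set α, u.toList.foldl (tstep θ) S = v.toList.foldl (tstep θ) S := by
  induction h with
  | of x y hxy =>
    obtain ⟨a, b, hab, hx, hy⟩ := hxy
    subst hx hy
    intro S
    simp only [FreeMonoid.toList_mul, FreeMonoid.toList_of, List.foldl_append,
      List.singleton_append, List.foldl_cons, List.foldl_nil]
    exact tstep_swap θ hrefl hsymm hab S
  | refl _ => intro S; rfl
  | symm _ ih => intro S; exact (ih S).symm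
  | trans _ _ ih1 ih2 => intro S; exact (ih1 S).trans (ih2 S)
  | mul _ _ ih1 ih2 =>
    intro S
    simp only [FreeMonoid.toList_mul, List.foldl_append]
    rw [ih1 S, ih2]

lemma TA_eq (hrefl : ∀ x, θ x x) (hsymm : ∀ x y, θ x y → θ y x) (w : List α) :
    TA θ (phi θ (FreeMonoid.ofList w)) = w.foldl (tstep θ) ∅ := by
  apply Set.Subset.antisymm
  · rintro y ⟨u, hu⟩
    obtain ⟨u', rfl⟩ := Con.mk'_surjective u
    have hc : traceCon θ (FreeMonoid.ofList w) (u' * FreeMonoid.of y) := by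
      exact (Con.eq _).1 hu
    have := fold_invariant θ hrefl hsymm hc (∅ : Set α)
    have htl : (FreeMonoid.ofList w).toList = w := rfl
    rw [htl] at this
    rw [this]
    simp only [FreeMonoid.toList_mul, FreeMonoid.toList_of, List.foldl_append,
      List.foldl_cons, List.foldl_nil]
    exact ⟨Or.inr rfl, hrefl y⟩
  · induction w using List.reverseRecOn with
    | nil => simp
    | append_singleton w x ih =>
      rw [List.foldl_append]
      rintro y ⟨hy1, hy2⟩
      have hsplit : FreeMonoid.ofList (w ++ [x]) =
          FreeMonoid.ofList w * FreeMonoid.of x := rfl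
      rcases hy1 with hy1 | rfl
      · obtain ⟨u, hu⟩ := ih hy1
        have hcomm : phi θ (FreeMonoid.of y * FreeMonoid.of x)
            = phi θ (FreeMonoid.of x * FreeMonoid.of y) := by
          exact (Con.eq _).2 <| ConGen.Rel.of _ _ ⟨y, x, hsymm x y hy2, rfl, rfl⟩
        refine ⟨u * phi θ (FreeMonoid.of x), ?_⟩
        rw [hsplit, map_mul, hu, mul_assoc, ← map_mul, hcomm, map_mul, ← mul_assoc]
      · exact ⟨phi θ (FreeMonoid.ofList w), by rw [hsplit, map_mul]⟩

lemma foldl_inter (B : Set α) (l : List α) :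
    ∀ S : Set α, l.foldl (fun B' x => (B' ∪ {x}) ∩ {z | θ x z} ∩ B) (S ∩ B)
      = l.foldl (tstep θ) S ∩ B := by
  induction l with
  | nil => intro S; rfl
  | cons x l ih =>
    intro S
    simp only [List.foldl_cons]
    have : (S ∩ B ∪ {x}) ∩ {z | θ x z} ∩ B = tstep θ S x ∩ B := by
      ext z
      simp only [tstep, Set.mem_inter_iff, Set.mem_union, Set.mem_singleton_iff,
        Set.mem_setOf_eq]
      tauto
    rw [this, ih]

end Aux

/-- in the automaton `A_B` (states: subsets of `B`, transition
`δ(B',x) = (B' ∪ {x}) ∩ Com(x) ∩ B`), the state reached from `∅` after reading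
`w` is `TA(φ(w)) ∩ B`. -/
theorem state_eq_TA_inter {α : Type} [Fintype α] (θ : α → α → Prop)
    (hrefl : ∀ x, θ x x) (hsymm : ∀ x y, θ x y → θ y x) (B : Set α)
    (w : List α) :
    w.foldl (fun B' x => (B' ∪ {x}) ∩ {z | θ x z} ∩ B) (∅ : Set α)
      = TA θ (phi θ (FreeMonoid.ofList w)) ∩ B := by
  have h0 : (∅ : Set α) = ∅ ∩ B := (Set.empty_inter B).symm
  rw [h0, foldl_inter, TA_eq θ hrefl hsymm]
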